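/- Suppose X, V : ℝ≥0 → ℝ≥0 with X continuous, V nonincreasing, X(t) ≤ X(0) + ∫_0^t V(s) ds, and suppose there is C : ℝ≥0 × ℝ≥0 → ℝ≥0 such that for each t, r ↦ C(t,r) is monotone increasing in r, C(t,r) → 0 as t → ∞ for each r ≥ X(0), and V(t) ≤ V(0)·C(t, sup_{s≤t} X(s)) for all t. If there exists r₀ ≥ X(0) with r₀ − X(0) > V(0)·∫_0^∞ C(s, r₀) ds, then sup_t X(t) ≤ r₀ and V(t) → 0 as t → ∞. -/

import Mathlib

open MeasureTheory Set Filter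

/-- Abstract flocking criterion (hierarchical leadership method): if
`X(t) ≤ X(0) + ∫_0^t V`, `V` nonincreasing with `V(t) ≤ V(0)·C(t, sup_{s≤t} X(s))`,
`C(·,r)` vanishing at infinity and `C(t,·)` increasing, then the existence of
`r₀ ≥ X(0)` with `r₀ − X(0) > V(0)·∫_0^∞ C(s,r₀) ds` implies `X` is bounded by `r₀`
and `V(t) → 0`. -/
theorem stmt_12 (X V : ℝ → ℝ) (C : ℝ → ℝ → ℝ)
    (hXc : ContinuousOn X (Ici 0))
    (hXnn : ∀ t, 0 ≤ t → 0 ≤ X t) (hVnn : ∀ t, 0 ≤ t → 0 ≤ V t)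
    (hVmono : ∀ s t, 0 ≤ s → s ≤ t → V t ≤ V s)
    (hXint : ∀ t, 0 ≤ t → X t ≤ X 0 + ∫ s in (0 : ℝ)..t, V s)
    (hCnn : ∀ t r, 0 ≤ C t r)
    (hCmono : ∀ t, 0 ≤ t → ∀ r₁ r₂, 0 ≤ r₁ → r₁ ≤ r₂ → C t r₁ ≤ C t r₂)
    (hCtend : ∀ r, X 0 ≤ r → Tendsto (fun t => C t r) atTop (nhds 0))
    (hVC : ∀ t, 0 ≤ t → V t ≤ V 0 * C t (sSup (X '' Icc 0 t)))
    (r₀ : ℝ) (hr₀ : X 0 ≤ r₀)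
    (hcond : ENNReal.ofReal (V 0) * (∫⁻ s in Ioi (0 : ℝ), ENNReal.ofReal (C s r₀)) <
      ENNReal.ofReal (r₀ - X 0)) :
    (∀ t, 0 ≤ t → X t ≤ r₀) ∧ Tendsto V atTop (nhds 0) := by
  have hV0 : 0 ≤ V 0 := hVnn 0 le_rfl
  have hrX : 0 < r₀ - X 0 :=
    ENNReal.ofReal_pos.mp (lt_of_le_of_lt zero_le hcond)
  -- key comparison lemma
  have key : ∀ t, 0 ≤ t → (∀ s, s ∈ Icc (0:ℝ) t → X s ≤ r₀) → V t ≤ V 0 * C t r₀ := by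
    intro t ht hb
    have hmem : X 0 ∈ X '' Icc 0 t := mem_image_of_mem _ (left_mem_Icc.2 ht)
    have hne : (X '' Icc 0 t).Nonempty := ⟨X 0, hmem⟩
    have hbdd : ∀ y ∈ X '' Icc 0 t, y ≤ r₀ := by
      rintro y ⟨s, hs, rfl⟩; exact hb s hs
    have hsup_le : sSup (X '' Icc 0 t) ≤ r₀ := csSup_le hne hbdd
    have hsup_nn : 0 ≤ sSup (X '' Icc 0 t) :=
      le_trans (hXnn 0 le_rfl) (le_csSup ⟨r₀, fun y hy => hbdd y hy⟩ hmem)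
    calc V t ≤ V 0 * C t (sSup (X '' Icc 0 t)) := hVC t ht
      _ ≤ V 0 * C t r₀ :=
        mul_le_mul_of_nonneg_left (hCmono t ht _ _ hsup_nn hsup_le) hV0
  -- part 1
  have part1 : ∀ t, 0 ≤ t → X t ≤ r₀ := by
    by_contra hcon
    push_neg at hcon
    obtain ⟨t₀, ht₀, ht₀X⟩ := hcon
    set K : Set ℝ := Icc 0 t₀ ∩ X ⁻¹' (Ici r₀) with hK
    have hKne : K.Nonempty := ⟨t₀, ⟨ht₀, le_rfl⟩, ht₀X.le⟩
    have hKbdd : BddBelow K := ⟨0, fun x hx => hx.1.1⟩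
    have hKclosed : IsClosed K :=
      (hXc.mono Icc_subset_Ici_self).preimage_isClosed_of_isClosed isClosed_Icc isClosed_Ici
    set T := sInf K with hTdef
    have hTK : T ∈ K := hKclosed.csInf_mem hKne hKbdd
    have hT0 : 0 ≤ T := hTK.1.1
    have hXT : r₀ ≤ X T := hTK.2
    have hlt : ∀ s, 0 ≤ s → s < T → X s < r₀ := by
      intro s hs hsT
      by_contra hc
      push_neg at hc
      have hsK : s ∈ K := ⟨⟨hs, hsT.le.trans hTK.1.2⟩, hc⟩
      exact absurd (csInf_le hKbdd hsK) (not_le.2 hsT)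
    -- integrability of V on [0, T]
    have hAnti : AntitoneOn V (uIcc 0 T) := by
      rw [uIcc_of_le hT0]
      exact fun a ha b _ hab => hVmono a b ha.1 hab
    have hint : IntervalIntegrable V volume 0 T := hAnti.intervalIntegrable
    have hnn : 0 ≤ᵐ[volume.restrict (Ioc 0 T)] V :=
      (ae_restrict_iff' measurableSet_Ioc).2
        (Eventually.of_forall fun s hs => hVnn s hs.1.le)
    have heq : ∫ s in (0:ℝ)..T, V s
        = (∫⁻ s in Ioc 0 T, ENNReal.ofReal (V s)).toReal := by
      rw [intervalIntegral.integral_of_le hT0,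
        integral_eq_lintegral_of_nonneg_ae hnn hint.1.aestronglyMeasurable]
    have h1 : ∀ᵐ s : ℝ, s ≠ T := by
      rw [ae_iff]
      simp [measure_singleton]
    --  (α := ℝ) T
    have hbound_ae : ∀ᵐ s ∂(volume.restrict (Ioc 0 T)),
        ENNReal.ofReal (V s) ≤ ENNReal.ofReal (V 0 * C s r₀) := by
      filter_upwards [ae_restrict_of_ae h1, ae_restrict_mem measurableSet_Ioc] with s hsne hs
      have hsT : s < T := lt_of_le_of_ne hs.2 hsne
      refine ENNReal.ofReal_le_ofReal (key s hs.1.le fun u hu => ?_)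
      exact (hlt u hu.1 (lt_of_le_of_lt hu.2 hsT)).le
    have hlin : ∫⁻ s in Ioc 0 T, ENNReal.ofReal (V s)
        ≤ ENNReal.ofReal (V 0) * ∫⁻ s in Ioi (0:ℝ), ENNReal.ofReal (C s r₀) := by
      calc ∫⁻ s in Ioc 0 T, ENNReal.ofReal (V s)
          ≤ ∫⁻ s in Ioc 0 T, ENNReal.ofReal (V 0 * C s r₀) := lintegral_mono_ae hbound_ae
        _ = ∫⁻ s in Ioc 0 T, ENNReal.ofReal (V 0) * ENNReal.ofReal (C s r₀) := by
            simp [ENNReal.ofReal_mul hV0]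
        _ = ENNReal.ofReal (V 0) * ∫⁻ s in Ioc 0 T, ENNReal.ofReal (C s r₀) :=
            lintegral_const_mul' _ _ ENNReal.ofReal_ne_top
        _ ≤ ENNReal.ofReal (V 0) * ∫⁻ s in Ioi (0:ℝ), ENNReal.ofReal (C s r₀) :=
            mul_le_mul_right (lintegral_mono_set Ioc_subset_Ioi_self) _
    have hfin : ∫⁻ s in Ioc 0 T, ENNReal.ofReal (V s) < ENNReal.ofReal (r₀ - X 0) :=
      lt_of_le_of_lt hlin hcond
    have hIlt : ∫ s in (0:ℝ)..T, V s < r₀ - X 0 := by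
      rw [heq]
      have := (ENNReal.toReal_lt_toReal hfin.ne_top ENNReal.ofReal_ne_top).mpr hfin
      rwa [ENNReal.toReal_ofReal hrX.le] at this
    have := hXint T hT0
    linarith
  refine ⟨part1, ?_⟩
  have hupper : ∀ᶠ t in atTop, V t ≤ V 0 * C t r₀ := by
    filter_upwards [eventually_ge_atTop (0:ℝ)] with t ht
    exact key t ht fun s hs => part1 s hs.1
  have hlower : ∀ᶠ t in atTop, 0 ≤ V t := by
    filter_upwards [eventually_ge_atTop (0:ℝ)] with t ht using hVnn t ht
  have hmul : Tendsto (fun t => V 0 * C t r₀) atTop (nhds 0) := by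
    simpa using (hCtend r₀ hr₀).const_mul (V 0)
  exact tendsto_of_tendsto_of_tendsto_of_le_of_le' tendsto_const_nhds hmul hlower hupper
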